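/- For the massive Gross–Neveu soliton U_ω with ω ∈ (0,1), ∫_ℝ (U_ω(x)² + conj(U_ω(x))²) dx = 2 log((1 + ω + √(1−ω²))/(1 + ω − √(1−ω²))), and consequently −(1/4) d/dω ∫_ℝ (U_ω² + conj(U_ω)²) dx = 1/(2ω√(1−ω²)). -/

import Mathlib

open MeasureTheory Real Filter

/-- The massive Gross–Neveu line soliton profile. -/
noncomputable def grossNeveuSoliton (ω x : ℝ) : ℂ :=
  (↑(Real.sqrt (1 - ω ^ 2)) : ℂ) *
    ((↑(Real.sqrt (1 + ω) * Real.cosh (Real.sqrt (1 - ω ^ 2) * x)) : ℂ)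
      - Complex.I * (↑(Real.sqrt (1 - ω) * Real.sinh (Real.sqrt (1 - ω ^ 2) * x)) : ℂ)) /
    (↑(1 + ω * Real.cosh (2 * Real.sqrt (1 - ω ^ 2) * x)) : ℂ)

lemma integrand_eq (w : ℝ) (hw : w ∈ Set.Ioo (0:ℝ) 1) (x : ℝ) :
    grossNeveuSoliton w x ^ 2 + (starRingEnd ℂ) (grossNeveuSoliton w x) ^ 2
      = ((2 * (1 - w^2) / (1 + w * Real.cosh (2 * Real.sqrt (1 - w^2) * x)) : ℝ) : ℂ) := by
  obtain ⟨hw0, hw1⟩ := hw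
  set m := Real.sqrt (1 - w^2) with hm
  set a := Real.sqrt (1+w) * Real.cosh (m*x) with ha
  set b := Real.sqrt (1-w) * Real.sinh (m*x) with hb
  set c := 1 + w * Real.cosh (2*m*x) with hc
  have hcpos : (0:ℝ) < c := by
    have := Real.cosh_pos (2*m*x); nlinarith
  have key : a^2 - b^2 = c := by
    rw [ha, hb, hc, mul_pow, mul_pow, Real.sq_sqrt (by linarith), Real.sq_sqrt (by linarith),
      show (2:ℝ)*m*x = 2*(m*x) by ring, Real.cosh_two_mul]
    nlinarith [Real.cosh_sq (m*x)]
  have hm2 : m^2 = 1 - w^2 := Real.sq_sqrt (by nlinarith)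
  have keyC : (a:ℂ)^2 - (b:ℂ)^2 = c := by exact_mod_cast key
  have hm2C : (m:ℂ)^2 = 1 - (w:ℂ)^2 := by exact_mod_cast hm2
  have hcC : (c:ℂ) ≠ 0 := by exact_mod_cast hcpos.ne'
  unfold grossNeveuSoliton
  rw [← hm, ← ha, ← hb, ← hc]
  simp only [map_div₀, map_mul, map_sub, Complex.conj_ofReal, Complex.conj_I]
  push_cast
  field_simp
  linear_combination (2*(m:ℂ)^2) * keyC + (2*(c:ℂ)) * hm2C
    + (2*(m:ℂ)^2*(b:ℂ)^2) * Complex.I_sq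

lemma real_integral (w : ℝ) (hw : w ∈ Set.Ioo (0:ℝ) 1) :
    ∫ x : ℝ, 2 * (1 - w^2) / (1 + w * Real.cosh (2 * Real.sqrt (1 - w^2) * x))
      = 2 * Real.log ((1 + w + Real.sqrt (1 - w^2)) / (1 + w - Real.sqrt (1 - w^2))) := by
  obtain ⟨hw0, hw1⟩ := hw
  set m := Real.sqrt (1 - w^2) with hm
  have hm2 : m^2 = 1 - w^2 := Real.sq_sqrt (by nlinarith)
  have hmpos : 0 < m := Real.sqrt_pos.2 (by nlinarith)
  set p := 1 + w + m with hp
  set q := 1 + w - m with hq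
  have hppos : 0 < p := by nlinarith
  have hqpos : 0 < q := by nlinarith
  clear_value m p q
  set A : ℝ → ℝ := fun x => (p * Real.exp (m*x) + q * Real.exp (-(m*x)))/2 with hA
  set B : ℝ → ℝ := fun x => (q * Real.exp (m*x) + p * Real.exp (-(m*x)))/2 with hB
  set G : ℝ → ℝ := fun x => Real.log (A x) - Real.log (B x) with hG
  set f : ℝ → ℝ := fun x => 2 * (1 - w^2) / (1 + w * Real.cosh (2 * m * x)) with hf
  have hApos : ∀ x, 0 < A x := fun x => by
    have t1 := mul_pos hppos (Real.exp_pos (m*x))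
    have t2 := mul_pos hqpos (Real.exp_pos (-(m*x)))
    show 0 < (p * Real.exp (m*x) + q * Real.exp (-(m*x)))/2
    linarith
  have hBpos : ∀ x, 0 < B x := fun x => by
    have t1 := mul_pos hqpos (Real.exp_pos (m*x))
    have t2 := mul_pos hppos (Real.exp_pos (-(m*x)))
    show 0 < (q * Real.exp (m*x) + p * Real.exp (-(m*x)))/2
    linarith
  have hcpos : ∀ x, 0 < 1 + w * Real.cosh (2*m*x) := fun x => by
    have := Real.cosh_pos (2*m*x); nlinarith
  have hfpos : ∀ x, 0 ≤ f x := fun x =>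
    div_nonneg (by nlinarith) (hcpos x).le
  have hexp : ∀ x : ℝ, Real.exp (m*x) * Real.exp (-(m*x)) = 1 := fun x => by
    rw [← Real.exp_add]; simp
  have hderiv : ∀ x, HasDerivAt G (f x) x := by
    intro x
    have h1 : HasDerivAt (fun y => Real.exp (m*y)) (Real.exp (m*x) * m) x := by
      simpa using ((hasDerivAt_id x).const_mul m).exp
    have h2 : HasDerivAt (fun y => Real.exp (-(m*y))) (Real.exp (-(m*x)) * (-m)) x := by
      simpa using (((hasDerivAt_id x).const_mul m).neg).exp
    have hA' : HasDerivAt A ((p * (Real.exp (m*x) * m) + q * (Real.exp (-(m*x)) * (-m)))/2) x :=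
      ((h1.const_mul p).add (h2.const_mul q)).div_const 2
    have hB' : HasDerivAt B ((q * (Real.exp (m*x) * m) + p * (Real.exp (-(m*x)) * (-m)))/2) x :=
      ((h1.const_mul q).add (h2.const_mul p)).div_const 2
    have hGd := (hA'.log (hApos x).ne').sub (hB'.log (hBpos x).ne')
    refine hGd.congr_deriv (Eq.symm ?_)
    show 2 * (1 - w^2) / (1 + w * Real.cosh (2 * m * x)) = _
    have hcosh : Real.cosh (2*m*x) = (Real.exp (m*x)^2 + Real.exp (-(m*x))^2)/2 := by
      rw [Real.cosh_eq, show (2:ℝ)*m*x = m*x + m*x by ring, show -(m*x + m*x) = -(m*x) + -(m*x) by ring,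
        Real.exp_add, Real.exp_add]
      ring
    have hAx : A x = (p * Real.exp (m*x) + q * Real.exp (-(m*x)))/2 := rfl
    have hBx : B x = (q * Real.exp (m*x) + p * Real.exp (-(m*x)))/2 := rfl
    rw [hcosh, hAx, hBx, ← hm2, hp, hq]
    have e1 := Real.exp_pos (m*x)
    have e2 := Real.exp_pos (-(m*x))
    have hA0 : (1 + w + m) * Real.exp (m*x) + (1 + w - m) * Real.exp (-(m*x)) > 0 := by
      have := hApos x
      rw [hAx, hp, hq] at this
      linarith
    have hB0 : (1 + w - m) * Real.exp (m*x) + (1 + w + m) * Real.exp (-(m*x)) > 0 := by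
      have := hBpos x
      rw [hBx, hp, hq] at this
      linarith
    have hc0 := hcpos x
    rw [hcosh] at hc0
    have hA1 : Real.exp (m*x) * (1 + w + m) + Real.exp (-(m*x)) * (1 + w - m) ≠ 0 := by
      nlinarith
    have hB1 : Real.exp (m*x) * (1 + w - m) + Real.exp (-(m*x)) * (1 + w + m) ≠ 0 := by
      nlinarith
    field_simp [hA0.ne', hB0.ne', hc0.ne', hA1, hB1]
    linear_combination (4*m*(2*Real.exp (m*x)*Real.exp (-(m*x)) - Real.exp (m*x)^2 - Real.exp (-(m*x))^2)) * hm2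
      + (-8*(1+w)*m*w*(Real.exp (m*x)^2 + Real.exp (-(m*x))^2)) * hexp x
  -- limits
  have h2m : Tendsto (fun x : ℝ => 2*m*x) atTop atTop :=
    Tendsto.const_mul_atTop (by positivity) tendsto_id
  have hEtop : Tendsto (fun x : ℝ => Real.exp (-(2*m*x))) atTop (nhds 0) :=
    Real.tendsto_exp_atBot.comp (tendsto_neg_atTop_atBot.comp h2m)
  have h2m' : Tendsto (fun x : ℝ => 2*m*x) atBot atBot :=
    Tendsto.const_mul_atBot (by positivity) tendsto_id
  have hEbot : Tendsto (fun x : ℝ => Real.exp (2*m*x)) atBot (nhds 0) :=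
    Real.tendsto_exp_atBot.comp h2m'
  have hGtop_eq : ∀ x : ℝ, G x =
      Real.log ((p + q * Real.exp (-(2*m*x))) / (q + p * Real.exp (-(2*m*x)))) := by
    intro x
    have e1 := Real.exp_pos (m*x)
    have e2 : (0:ℝ) < (Real.exp (m*x))⁻¹ := inv_pos.2 e1
    have hre : Real.exp (-(2*m*x)) = (Real.exp (m*x))⁻¹^2 := by
      rw [← Real.exp_neg, ← Real.exp_nat_mul]; ring_nf
    have hAx : A x = (p * Real.exp (m*x) + q * (Real.exp (m*x))⁻¹)/2 := by
      show (p * Real.exp (m*x) + q * Real.exp (-(m*x)))/2 = _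
      rw [Real.exp_neg]
    have hBx : B x = (q * Real.exp (m*x) + p * (Real.exp (m*x))⁻¹)/2 := by
      show (q * Real.exp (m*x) + p * Real.exp (-(m*x)))/2 = _
      rw [Real.exp_neg]
    have hB0 : (0:ℝ) < (q * Real.exp (m*x) + p * (Real.exp (m*x))⁻¹)/2 := by
      have := mul_pos hqpos e1; have := mul_pos hppos e2; linarith
    have hden0 : (0:ℝ) < q + p * (Real.exp (m*x))⁻¹^2 := by
      have := mul_pos hppos (pow_pos e2 2); linarith
    have hAB : A x / B x = (p + q * Real.exp (-(2*m*x))) / (q + p * Real.exp (-(2*m*x))) := by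
      rw [hre, hAx, hBx, div_eq_div_iff hB0.ne' hden0.ne']
      field_simp
    show Real.log (A x) - Real.log (B x) = _
    rw [← Real.log_div (hApos x).ne' (hBpos x).ne', hAB]
  have hGbot_eq : ∀ x : ℝ, G x =
      Real.log ((p * Real.exp (2*m*x) + q) / (q * Real.exp (2*m*x) + p)) := by
    intro x
    have e1 := Real.exp_pos (m*x)
    have e2 : (0:ℝ) < (Real.exp (m*x))⁻¹ := inv_pos.2 e1
    have hre : Real.exp (2*m*x) = (Real.exp (m*x))^2 := by
      rw [← Real.exp_nat_mul]; ring_nf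
    have hAx : A x = (p * Real.exp (m*x) + q * (Real.exp (m*x))⁻¹)/2 := by
      show (p * Real.exp (m*x) + q * Real.exp (-(m*x)))/2 = _
      rw [Real.exp_neg]
    have hBx : B x = (q * Real.exp (m*x) + p * (Real.exp (m*x))⁻¹)/2 := by
      show (q * Real.exp (m*x) + p * Real.exp (-(m*x)))/2 = _
      rw [Real.exp_neg]
    have hB0 : (0:ℝ) < (q * Real.exp (m*x) + p * (Real.exp (m*x))⁻¹)/2 := by
      have := mul_pos hqpos e1; have := mul_pos hppos e2; linarith
    have hden2 : (0:ℝ) < q * (Real.exp (m*x))^2 + p := by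
      have := mul_pos hqpos (pow_pos e1 2); linarith
    have hAB : A x / B x = (p * Real.exp (2*m*x) + q) / (q * Real.exp (2*m*x) + p) := by
      rw [hre, hAx, hBx, div_eq_div_iff hB0.ne' hden2.ne']
      field_simp
    show Real.log (A x) - Real.log (B x) = _
    rw [← Real.log_div (hApos x).ne' (hBpos x).ne', hAB]
  have htop : Tendsto G atTop (nhds (Real.log (p/q))) := by
    have hratio : Tendsto (fun x : ℝ => (p + q * Real.exp (-(2*m*x))) / (q + p * Real.exp (-(2*m*x))))
        atTop (nhds (p/q)) := by
      have hc1 : Tendsto (fun _ : ℝ => p) atTop (nhds p) := tendsto_const_nhds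
      have hc2 : Tendsto (fun _ : ℝ => q) atTop (nhds q) := tendsto_const_nhds
      have := (hc1.add (hEtop.const_mul q)).div
        (hc2.add (hEtop.const_mul p)) (by simpa using hqpos.ne')
      simpa [Pi.div_def] using this
    have := ((Real.continuousAt_log (by positivity : p/q ≠ 0)).tendsto).comp hratio
    simp only [funext hGtop_eq]
    exact this
  have hbot : Tendsto G atBot (nhds (Real.log (q/p))) := by
    have hratio : Tendsto (fun x : ℝ => (p * Real.exp (2*m*x) + q) / (q * Real.exp (2*m*x) + p))
        atBot (nhds (q/p)) := by
      have hc1 : Tendsto (fun _ : ℝ => q) atBot (nhds q) := tendsto_const_nhds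
      have hc2 : Tendsto (fun _ : ℝ => p) atBot (nhds p) := tendsto_const_nhds
      have := ((hEbot.const_mul p).add hc1).div
        ((hEbot.const_mul q).add hc2) (by simpa using hppos.ne')
      simpa [Pi.div_def] using this
    have := ((Real.continuousAt_log (by positivity : q/p ≠ 0)).tendsto).comp hratio
    simp only [funext hGbot_eq]
    exact this
  -- integrability
  have hIoi : IntegrableOn f (Set.Ioi (0:ℝ)) :=
    integrableOn_Ioi_deriv_of_nonneg' (fun x _ => hderiv x) (fun x _ => hfpos x) htop
  have hIio : IntegrableOn f (Set.Iio (0:ℝ)) := by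
    rw [← (Measure.measurePreserving_neg (volume : Measure ℝ)).integrableOn_comp_preimage
        (Homeomorph.neg ℝ).measurableEmbedding]
    simp only [Function.comp_def]
    rw [show (Neg.neg ⁻¹' Set.Iio (0:ℝ)) = Set.Ioi 0 by ext y; simp]
    apply hIoi.congr_fun _ measurableSet_Ioi
    intro y _
    show f y = f (-y)
    rw [hf]
    simp [mul_neg, Real.cosh_neg]
  have hint : Integrable f := by
    rw [← integrableOn_univ, ← Set.Iio_union_Ici (a := (0:ℝ)), integrableOn_union]
    exact ⟨hIio, (integrableOn_Ici_iff_integrableOn_Ioi).2 hIoi⟩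
  have hval := integral_of_hasDerivAt_of_tendsto hderiv hint hbot htop
  rw [hf] at hval
  rw [hval, Real.log_div hppos.ne' hqpos.ne', Real.log_div hqpos.ne' hppos.ne']
  ring

lemma gn_integral (w : ℝ) (hw : w ∈ Set.Ioo (0:ℝ) 1) :
    (∫ x : ℝ, (grossNeveuSoliton w x ^ 2 + (starRingEnd ℂ) (grossNeveuSoliton w x) ^ 2))
      = Complex.ofReal (2 * Real.log ((1 + w + Real.sqrt (1 - w ^ 2))
          / (1 + w - Real.sqrt (1 - w ^ 2)))) := by
  have h : ∀ x : ℝ, grossNeveuSoliton w x ^ 2 + (starRingEnd ℂ) (grossNeveuSoliton w x) ^ 2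
      = ((2 * (1 - w^2) / (1 + w * Real.cosh (2 * Real.sqrt (1 - w^2) * x)) : ℝ) : ℂ) :=
    integrand_eq w hw
  simp_rw [h]
  have hcast : ∫ x : ℝ, ((2 * (1 - w^2) / (1 + w * Real.cosh (2 * Real.sqrt (1 - w^2) * x)) : ℝ) : ℂ)
      = ((∫ x : ℝ, 2 * (1 - w^2) / (1 + w * Real.cosh (2 * Real.sqrt (1 - w^2) * x)) : ℝ) : ℂ) :=
    integral_ofReal
  rw [hcast, real_integral w hw]

lemma F_hasDerivAt (w : ℝ) (hw : w ∈ Set.Ioo (0:ℝ) 1) :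
    HasDerivAt (fun v : ℝ => 2 * Real.log ((1 + v + Real.sqrt (1 - v ^ 2))
          / (1 + v - Real.sqrt (1 - v ^ 2)))) (-2 / (w * Real.sqrt (1 - w ^ 2))) w := by
  obtain ⟨hw0, hw1⟩ := hw
  set m := Real.sqrt (1 - w^2) with hm
  have hm2 : m^2 = 1 - w^2 := Real.sq_sqrt (by nlinarith)
  have hmpos : 0 < m := Real.sqrt_pos.2 (by nlinarith)
  have hppos : 0 < 1 + w + m := by nlinarith
  have hqpos : 0 < 1 + w - m := by nlinarith
  have hinner : HasDerivAt (fun v : ℝ => 1 - v^2) (-(2*w)) w := by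
    simpa using ((hasDerivAt_pow 2 w).const_sub 1)
  have hsq : HasDerivAt (fun v : ℝ => Real.sqrt (1 - v^2)) (-w/m) w := by
    have h := (Real.hasDerivAt_sqrt (by nlinarith : (1:ℝ)-w^2 ≠ 0)).comp w hinner
    refine h.congr_deriv ?_
    rw [← hm]
    field_simp
  have hN : HasDerivAt (fun v : ℝ => 1 + v + Real.sqrt (1 - v^2)) (1 + (-w/m)) w := by
    exact (((hasDerivAt_id w).const_add 1).add hsq)
  have hD : HasDerivAt (fun v : ℝ => 1 + v - Real.sqrt (1 - v^2)) (1 - (-w/m)) w := by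
    exact (((hasDerivAt_id w).const_add 1).sub hsq)
  have hQ := hN.div hD (by rw [← hm]; exact hqpos.ne')
  have hlog := (hQ.log (by show (1 + w + √(1 - w ^ 2)) / (1 + w - √(1 - w ^ 2)) ≠ 0; rw [← hm]; positivity)).const_mul 2
  refine hlog.congr_deriv ?_
  simp only [Pi.div_apply]
  rw [← hm]
  field_simp
  linear_combination (-2*w - 1) * hm2

/-- ∫ (U_ω² + conj(U_ω)²) dx = 2 log((1+ω+√(1−ω²))/(1+ω−√(1−ω²))), and
−(1/4) d/dω ∫ (U_ω² + conj(U_ω)²) dx = 1/(2ω√(1−ω²)). -/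
theorem grossNeveuSoliton_square_integral (ω : ℝ) (hω : ω ∈ Set.Ioo (0 : ℝ) 1) :
    (∫ x : ℝ, (grossNeveuSoliton ω x ^ 2 + (starRingEnd ℂ) (grossNeveuSoliton ω x) ^ 2))
      = Complex.ofReal (2 * Real.log ((1 + ω + Real.sqrt (1 - ω ^ 2))
          / (1 + ω - Real.sqrt (1 - ω ^ 2)))) ∧
    -(1/4 : ℂ) * deriv
        (fun w : ℝ => ∫ x : ℝ,
          (grossNeveuSoliton w x ^ 2 + (starRingEnd ℂ) (grossNeveuSoliton w x) ^ 2)) ω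
      = Complex.ofReal (1 / (2 * ω * Real.sqrt (1 - ω ^ 2))) := by
  constructor
  · exact gn_integral ω hω
  · have hev : (fun w : ℝ => ∫ x : ℝ,
        (grossNeveuSoliton w x ^ 2 + (starRingEnd ℂ) (grossNeveuSoliton w x) ^ 2))
        =ᶠ[nhds ω] (fun w : ℝ => (Complex.ofReal (2 * Real.log ((1 + w + Real.sqrt (1 - w ^ 2))
          / (1 + w - Real.sqrt (1 - w ^ 2)))))) := by
      filter_upwards [Ioo_mem_nhds hω.1 hω.2] with v hv using gn_integral v hv
    rw [hev.deriv_eq]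
    have h := (F_hasDerivAt ω hω).ofReal_comp
    rw [h.deriv]
    have hm2 : (Real.sqrt (1 - ω^2))^2 = 1 - ω^2 := Real.sq_sqrt (by nlinarith [hω.1, hω.2])
    have hmpos : 0 < Real.sqrt (1 - ω^2) := Real.sqrt_pos.2 (by nlinarith [hω.1, hω.2])
    have : (-(1/4:ℂ)) = ((-(1/4):ℝ):ℂ) := by norm_num
    rw [this, ← Complex.ofReal_mul, Complex.ofReal_inj]
    have h0 := hω.1
    field_simp
    ring
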